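/- For every links system L and each j ∈ {1,…,k−1}, let g = 1+(j−1)k/2 (the largest index i such that N_i ∩ Q_j = ∅) and h = 1+j·k/2 (the smallest index i such that Q_j ⊆ N_i). Then, as vectors in ℝ^L, χ^{δ_L(Q_j)} − χ^{δ_L(N_h)} + χ^{δ_L(N_g)} = 2·χ^{L'}, where L' = δ_L(Q_j) ∩ δ_L(N_g); moreover |L'| = k/2. -/
import Mathlib


open Finset

namespace CoverSmallCuts

/-- `nn k` is the number `n = 2 + k(k-1)/2` of nodes. -/
def nn (k : ℕ) : ℕ := 2 + k * (k - 1) / 2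

/-- `mm k` is the number `m = k(k-1)/2 + k` of links. -/
def mm (k : ℕ) : ℕ := k * (k - 1) / 2 + k

/-- The nested set `N_i = {1, …, i}`. -/
def Nset (i : ℕ) : Finset ℕ := Finset.Icc 1 i

/-- The Q-set `Q_j = {2+(j-1)k/2, …, 1+j·k/2}`. -/
def Qset (k j : ℕ) : Finset ℕ := Finset.Icc (2 + (j - 1) * (k / 2)) (1 + j * (k / 2))

/-- Capacity of the path edge `{i, i+1}` of the capacitated graph `G`. -/
def pathCap (k i : ℕ) : ℕ :=
  if i = 1 ∨ i = nn k - 1 then 2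
  else if ∃ j ∈ Finset.Icc 1 (k - 1), i ∈ Qset k j ∧ i + 1 ∈ Qset k j then 3
  else 1

/-- Capacity of the cut `δ(S)` in the capacitated graph `G`: the sum of the capacities
of the edges of `G` with exactly one endpoint in `S`. -/
def cutCap (k : ℕ) (S : Finset ℕ) : ℕ :=
  (∑ i ∈ Finset.Icc 1 (nn k - 1),
      if (i ∈ S) ↔ ((i + 1) ∈ S) then 0 else pathCap k i)
  + (∑ j ∈ Finset.Icc 1 (k - 1),
      if ((1 + (j - 1) * (k / 2)) ∈ S) ↔ ((2 + j * (k / 2)) ∈ S) then 0 else 1)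

/-- A links system: the `s,t`-paths `P_1, …, P_{k-1}` are recorded by the function
`node`, where `node i t` is the `t`-th node of the path `P_i` (for `1 ≤ i ≤ k-1` and
`0 ≤ t ≤ k/2 + 1`); the class `P_k` consists of the single link `{1, n}`. -/
structure LinksSystem (k : ℕ) where
  node : ℕ → ℕ → ℕ
  /-- each path `P_i` starts at `s = 1` -/
  node_first : ∀ i ∈ Finset.Icc 1 (k - 1), node i 0 = 1
  /-- each path `P_i` ends at `t = n` -/
  node_last : ∀ i ∈ Finset.Icc 1 (k - 1), node i (k / 2 + 1) = nn k
  /-- node indices strictly increase along each path -/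
  node_mono : ∀ i ∈ Finset.Icc 1 (k - 1), ∀ t ≤ k / 2, node i t < node i (t + 1)
  /-- every node in `{2, …, n-1}` is an internal node of exactly one of `P_1, …, P_{k-1}` -/
  cover : ∀ v ∈ Finset.Icc 2 (nn k - 1),
      ∃! i, i ∈ Finset.Icc 1 (k - 1) ∧ ∃ t ∈ Finset.Icc 1 (k / 2), node i t = v
  /-- `P_i` has an internal node in `Q_j` iff
  `(i ≤ j ≤ min(i+k/2-1, k-1))` or `(j < i and j ≤ i-k/2)` -/
  meetsQ : ∀ i ∈ Finset.Icc 1 (k - 1), ∀ j ∈ Finset.Icc 1 (k - 1),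
      ((∃ t ∈ Finset.Icc 1 (k / 2), node i t ∈ Qset k j) ↔
        ((i ≤ j ∧ j ≤ min (i + k / 2 - 1) (k - 1)) ∨ (j < i ∧ j ≤ i - k / 2)))

/-- The class `P_i` of links: the edge set of the path `P_i` for `i < k`,
and `{{1, n}}` for `i = k`. -/
def LinksSystem.P {k : ℕ} (LS : LinksSystem k) (i : ℕ) : Finset (Sym2 ℕ) :=
  if i = k then {s(1, nn k)}
  else (Finset.Icc 0 (k / 2)).image fun t => s(LS.node i t, LS.node i (t + 1))

/-- The set `L` of all links. -/
def LinksSystem.links {k : ℕ} (LS : LinksSystem k) : Finset (Sym2 ℕ) :=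
  (Finset.Icc 1 k).biUnion LS.P

open scoped Classical in
/-- `deltaL F S` is `δ_F(S)`: the set of links of `F` with exactly one endpoint in `S`. -/
noncomputable def deltaL (F : Finset (Sym2 ℕ)) (S : Finset ℕ) : Finset (Sym2 ℕ) :=
  F.filter fun e => ∃ a b, e = s(a, b) ∧ a ∈ S ∧ b ∉ S

/-- The 0-1 indicator vector `χ^F` of a set `F` of links. -/
noncomputable def chi (F : Finset (Sym2 ℕ)) : Sym2 ℕ → ℝ :=
  fun e => if e ∈ F then 1 else 0




lemma cross_iff (S : Finset ℕ) (a b : ℕ) :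
    (∃ x y, s(a,b) = s(x,y) ∧ x ∈ S ∧ y ∉ S) ↔ ((a ∈ S ∧ b ∉ S) ∨ (b ∈ S ∧ a ∉ S)) := by
  constructor
  · rintro ⟨x, y, hxy, hx, hy⟩
    rw [Sym2.eq_iff] at hxy
    rcases hxy with ⟨rfl, rfl⟩ | ⟨rfl, rfl⟩
    · exact Or.inl ⟨hx, hy⟩
    · exact Or.inr ⟨hx, hy⟩
  · rintro (⟨h1, h2⟩ | ⟨h1, h2⟩)
    · exact ⟨a, b, rfl, h1, h2⟩
    · exact ⟨b, a, Sym2.eq_swap, h1, h2⟩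

open scoped Classical in
lemma mem_deltaL {F : Finset (Sym2 ℕ)} {S : Finset ℕ} {a b : ℕ} :
    s(a,b) ∈ deltaL F S ↔ s(a,b) ∈ F ∧ ((a ∈ S ∧ b ∉ S) ∨ (b ∈ S ∧ a ∉ S)) := by
  simp only [deltaL, Finset.mem_filter]
  rw [cross_iff]

open scoped Classical in
lemma deltaL_subset (F : Finset (Sym2 ℕ)) (S : Finset ℕ) : deltaL F S ⊆ F :=
  Finset.filter_subset _ _

lemma chi_comb (F : Finset (Sym2 ℕ)) (Q Ng Nh : Finset ℕ)
    (hdisj : ∀ a, a ∈ Q → a ∉ Ng)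
    (hunion : ∀ a, a ∈ Nh ↔ a ∈ Q ∨ a ∈ Ng) (e : Sym2 ℕ) :
    chi (deltaL F Q) e - chi (deltaL F Nh) e + chi (deltaL F Ng) e
      = 2 * chi (deltaL F Q ∩ deltaL F Ng) e := by
  classical
  induction e using Sym2.ind with
  | _ a b =>
  simp only [chi, Finset.mem_inter, mem_deltaL, hunion]
  by_cases hF : s(a,b) ∈ F <;>
    by_cases h1 : a ∈ Q <;> by_cases h2 : b ∈ Q <;>
    by_cases h3 : a ∈ Ng <;> by_cases h4 : b ∈ Ng <;>
    first
      | exact absurd h3 (hdisj a h1)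
      | exact absurd h4 (hdisj b h2)
      | (simp only [hF, h1, h2, h3, h4]; norm_num)

lemma LinksSystem.node_le {k : ℕ} (LS : LinksSystem k) {i : ℕ}
    (hi : i ∈ Finset.Icc 1 (k-1)) {t t' : ℕ} (h : t ≤ t') (h' : t' ≤ k/2 + 1) :
    LS.node i t ≤ LS.node i t' := by
  induction t', h using Nat.le_induction with
  | base => exact le_rfl
  | succ m hm ih =>
    exact le_trans (ih (by omega)) (le_of_lt (LS.node_mono i hi m (by omega)))

lemma LinksSystem.node_pos {k : ℕ} (LS : LinksSystem k) {i : ℕ}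
    (hi : i ∈ Finset.Icc 1 (k-1)) {t : ℕ} (ht : t ≤ k/2 + 1) : 1 ≤ LS.node i t := by
  have h0 := LS.node_first i hi
  calc 1 = LS.node i 0 := h0.symm
  _ ≤ LS.node i t := LS.node_le hi (Nat.zero_le _) ht


lemma card_inter {k : ℕ} (hk : 4 ≤ k) (hke : Even k) (LS : LinksSystem k)
    {j : ℕ} (hj1 : 1 ≤ j) (hj2 : j ≤ k - 1) :
    (deltaL LS.links (Qset k j) ∩
        deltaL LS.links (Nset (1 + (j - 1) * (k / 2)))).card = k / 2 := by
  classical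
  obtain ⟨r, hr⟩ := id hke
  have hdvd : 2 ∣ k := ⟨r, by omega⟩
  have hq2 : 2 ≤ k / 2 := by omega
  have hmul : j * (k/2) = (j-1) * (k/2) + k/2 := by
    have h2 := add_one_mul (j-1) (k/2)
    rwa [show j - 1 + 1 = j by omega] at h2
  set g := 1 + (j-1) * (k/2) with hgdef
  set h := 1 + j * (k/2) with hhdef
  have hg1 : 1 ≤ g := by omega
  have hgh : g + k/2 = h := by omega
  have hhn : h + 1 ≤ nn k := by
    have hkk : k * (k-1) / 2 = (k-1) * (k/2) := by
      rw [Nat.mul_comm k (k-1), Nat.mul_div_assoc (k-1) hdvd]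
    have h3 : j * (k/2) ≤ (k-1) * (k/2) := Nat.mul_le_mul hj2 le_rfl
    have hnn : nn k = 2 + k * (k-1) / 2 := rfl
    omega
  have hQ : Qset k j = Finset.Icc (g+1) h := by
    rw [Qset]
    congr 1 <;> omega
  have hjmem : j ∈ Finset.Icc 1 (k-1) := by simp only [Finset.mem_Icc]; omega
  rw [hQ]
  simp only [Nset]
  -- the choice function c
  have hgen : ∀ i ∈ Finset.Icc 1 (k-1),
      Nat.findGreatest (fun t => LS.node i t ≤ g) (k/2) ≤ k/2 ∧
      LS.node i (Nat.findGreatest (fun t => LS.node i t ≤ g) (k/2)) ≤ g ∧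
      g < LS.node i (Nat.findGreatest (fun t => LS.node i t ≤ g) (k/2) + 1) ∧
      (∀ t ≤ k/2, LS.node i t ≤ g →
        t ≤ Nat.findGreatest (fun t => LS.node i t ≤ g) (k/2)) := by
    intro i hi
    have h0 : LS.node i 0 ≤ g := by rw [LS.node_first i hi]; omega
    have hle : Nat.findGreatest (fun t => LS.node i t ≤ g) (k/2) ≤ k/2 :=
      Nat.findGreatest_le _
    have hspec : LS.node i (Nat.findGreatest (fun t => LS.node i t ≤ g) (k/2)) ≤ g :=
      Nat.findGreatest_spec (P := fun t => LS.node i t ≤ g) (Nat.zero_le _) h0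
    refine ⟨hle, hspec, ?_, fun t ht hgt => Nat.le_findGreatest ht hgt⟩
    by_cases hcq : Nat.findGreatest (fun t => LS.node i t ≤ g) (k/2) = k/2
    · rw [hcq, LS.node_last i hi]
      omega
    · have hgt := Nat.findGreatest_is_greatest (P := fun t => LS.node i t ≤ g) (n := k/2)
        (k := Nat.findGreatest (fun t => LS.node i t ≤ g) (k/2) + 1) (by omega) (by omega)
      have h7 : ¬ LS.node i (Nat.findGreatest (fun t => LS.node i t ≤ g) (k/2) + 1) ≤ g := hgt
      omega
  obtain ⟨c, hc⟩ : ∃ c : ℕ → ℕ, ∀ i ∈ Finset.Icc 1 (k-1),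
      c i ≤ k/2 ∧ LS.node i (c i) ≤ g ∧ g < LS.node i (c i + 1) ∧
      (∀ t ≤ k/2, LS.node i t ≤ g → t ≤ c i) :=
    ⟨fun i => Nat.findGreatest (fun t => LS.node i t ≤ g) (k/2), hgen⟩
  -- the set S of path indices
  have hScard : ((Finset.Icc 1 (k-1)).filter (fun i =>
      (i ≤ j ∧ j ≤ min (i + k/2 - 1) (k-1)) ∨ (j < i ∧ j ≤ i - k/2))).card = k/2 := by
    have hset : ((Finset.Icc 1 (k-1)).filter (fun i =>
        (i ≤ j ∧ j ≤ min (i + k/2 - 1) (k-1)) ∨ (j < i ∧ j ≤ i - k/2)))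
        = Finset.Icc (max 1 (j+1-k/2)) j ∪ Finset.Icc (j+k/2) (k-1) := by
      ext i
      simp only [Finset.mem_filter, Finset.mem_union, Finset.mem_Icc]
      omega
    rw [hset, Finset.card_union_of_disjoint, Nat.card_Icc, Nat.card_Icc]
    · omega
    · rw [Finset.disjoint_left]
      intro a ha hb
      simp only [Finset.mem_Icc] at ha hb
      omega
  -- key facts for indices in S
  have hkey : ∀ i ∈ Finset.Icc 1 (k-1),
      ((i ≤ j ∧ j ≤ min (i + k/2 - 1) (k-1)) ∨ (j < i ∧ j ≤ i - k/2)) →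
      LS.node i (c i + 1) ≤ h ∧ c i + 1 ≤ k/2 := by
    intro i hi hcond
    obtain ⟨hc1, hc2, hc3, hc4⟩ := hc i hi
    obtain ⟨t0, ht0, hQt0⟩ := (LS.meetsQ i hi j hjmem).mpr hcond
    rw [hQ, Finset.mem_Icc] at hQt0
    simp only [Finset.mem_Icc] at ht0
    have htc : c i + 1 ≤ t0 := by
      by_contra hcon
      have : LS.node i t0 ≤ LS.node i (c i) := LS.node_le hi (by omega) (by omega)
      omega
    have hvle : LS.node i (c i + 1) ≤ LS.node i t0 := LS.node_le hi htc (by omega)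
    refine ⟨by omega, ?_⟩
    by_contra hcon
    have hlast := LS.node_last i hi
    rw [show k/2 + 1 = c i + 1 by omega] at hlast
    omega
  -- membership of the crossing edges
  have hf_mem : ∀ i ∈ ((Finset.Icc 1 (k-1)).filter (fun i =>
      (i ≤ j ∧ j ≤ min (i + k/2 - 1) (k-1)) ∨ (j < i ∧ j ≤ i - k/2))),
      s(LS.node i (c i), LS.node i (c i + 1)) ∈
        deltaL LS.links (Finset.Icc (g+1) h) ∩ deltaL LS.links (Finset.Icc 1 g) := by
    intro i hi
    rw [Finset.mem_filter] at hi
    obtain ⟨hi1, hcond⟩ := hi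
    obtain ⟨hc1, hc2, hc3, hc4⟩ := hc i hi1
    obtain ⟨hkey1, hkey2⟩ := hkey i hi1 hcond
    have hpos : 1 ≤ LS.node i (c i) := LS.node_pos hi1 (by omega)
    simp only [Finset.mem_Icc] at hi1
    have hlink : s(LS.node i (c i), LS.node i (c i + 1)) ∈ LS.links := by
      rw [LinksSystem.links, Finset.mem_biUnion]
      refine ⟨i, by simp only [Finset.mem_Icc]; omega, ?_⟩
      rw [LinksSystem.P, if_neg (by omega : ¬ i = k)]
      exact Finset.mem_image.mpr ⟨c i, by simp only [Finset.mem_Icc]; omega, rfl⟩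
    rw [Finset.mem_inter, mem_deltaL, mem_deltaL]
    simp only [Finset.mem_Icc]
    exact ⟨⟨hlink, Or.inr ⟨⟨by omega, by omega⟩, by omega⟩⟩,
           hlink, Or.inl ⟨⟨by omega, by omega⟩, by omega⟩⟩
  have hcard := Finset.card_bij
    (fun i (_ : i ∈ (Finset.Icc 1 (k-1)).filter (fun i =>
      (i ≤ j ∧ j ≤ min (i + k/2 - 1) (k-1)) ∨ (j < i ∧ j ≤ i - k/2))) =>
        s(LS.node i (c i), LS.node i (c i + 1)))
    hf_mem
    ?inj ?surj
  case inj =>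
    intro i1 hi1 i2 hi2 heq
    rw [Finset.mem_filter] at hi1 hi2
    obtain ⟨hi1m, hcond1⟩ := hi1
    obtain ⟨hi2m, hcond2⟩ := hi2
    obtain ⟨hc11, hc12, hc13, hc14⟩ := hc i1 hi1m
    obtain ⟨hc21, hc22, hc23, hc24⟩ := hc i2 hi2m
    obtain ⟨hk11, hk12⟩ := hkey i1 hi1m hcond1
    obtain ⟨hk21, hk22⟩ := hkey i2 hi2m hcond2
    rw [Sym2.eq_iff] at heq
    have hv : LS.node i1 (c i1 + 1) = LS.node i2 (c i2 + 1) := by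
      rcases heq with ⟨h1, h2⟩ | ⟨h1, h2⟩
      · exact h2
      · omega
    have hvmem : LS.node i1 (c i1 + 1) ∈ Finset.Icc 2 (nn k - 1) := by
      simp only [Finset.mem_Icc]; omega
    have huniq := LS.cover _ hvmem
    exact huniq.unique
      ⟨hi1m, c i1 + 1, by simp only [Finset.mem_Icc]; omega, rfl⟩
      ⟨hi2m, c i2 + 1, by simp only [Finset.mem_Icc]; omega, hv.symm⟩
  case surj =>
    intro e he
    rw [Finset.mem_inter] at he
    obtain ⟨heQ, heN⟩ := he
    have heL : e ∈ LS.links := deltaL_subset _ _ heQ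
    rw [LinksSystem.links, Finset.mem_biUnion] at heL
    obtain ⟨i0, hi0, hP⟩ := heL
    simp only [Finset.mem_Icc] at hi0
    by_cases hik : i0 = k
    · subst hik
      rw [LinksSystem.P, if_pos rfl, Finset.mem_singleton] at hP
      rw [hP, mem_deltaL] at heQ
      simp only [Finset.mem_Icc] at heQ
      have hnn : nn i0 = 2 + i0 * (i0 - 1) / 2 := rfl
      exfalso
      omega
    · rw [LinksSystem.P, if_neg hik] at hP
      obtain ⟨t, ht, hte⟩ := Finset.mem_image.mp hP
      simp only [Finset.mem_Icc] at ht
      have hi0m : i0 ∈ Finset.Icc 1 (k-1) := by simp only [Finset.mem_Icc]; omega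
      rw [← hte, mem_deltaL] at heQ heN
      simp only [Finset.mem_Icc] at heQ heN
      have huv : LS.node i0 t < LS.node i0 (t+1) := LS.node_mono i0 hi0m t (by omega)
      have hpos : 1 ≤ LS.node i0 t := LS.node_pos hi0m (by omega)
      have hu : LS.node i0 t ≤ g := by omega
      have hgv : g < LS.node i0 (t+1) := by omega
      have hvh : LS.node i0 (t+1) ≤ h := by omega
      obtain ⟨hc1, hc2, hc3, hc4⟩ := hc i0 hi0m
      have hct : c i0 = t := by
        have h5 : t ≤ c i0 := hc4 t (by omega) hu
        by_contra hne
        have h6 : LS.node i0 (t+1) ≤ LS.node i0 (c i0) :=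
          LS.node_le hi0m (by omega) (by omega)
        omega
      have htk : t + 1 ≤ k/2 := by
        by_contra hcon
        have hlast := LS.node_last i0 hi0m
        rw [show k/2 + 1 = t + 1 by omega] at hlast
        omega
      have hcond : (i0 ≤ j ∧ j ≤ min (i0 + k/2 - 1) (k-1)) ∨ (j < i0 ∧ j ≤ i0 - k/2) := by
        refine (LS.meetsQ i0 hi0m j hjmem).mp ⟨t+1, by simp only [Finset.mem_Icc]; omega, ?_⟩
        rw [hQ, Finset.mem_Icc]
        omega
      refine ⟨i0, Finset.mem_filter.mpr ⟨hi0m, hcond⟩, ?_⟩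
      rw [← hct] at hte
      exact hte
  rw [← hcard, hScard]


/-- for every links system `L` and each `j ∈ {1, …, k-1}`, letting
`g = 1+(j-1)k/2` (the largest index `i` with `N_i ∩ Q_j = ∅`) and `h = 1+j·k/2`
(the smallest index `i` with `Q_j ⊆ N_i`), we have
`χ^{δ_L(Q_j)} - χ^{δ_L(N_h)} + χ^{δ_L(N_g)} = 2·χ^{L'}` where
`L' = δ_L(Q_j) ∩ δ_L(N_g)`; moreover `|L'| = k/2`. -/
theorem statement9 (k : ℕ) (hk : 4 ≤ k) (hke : Even k) (LS : LinksSystem k) :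
    ∀ j ∈ Finset.Icc 1 (k - 1),
      (∀ i : ℕ, Nset i ∩ Qset k j = ∅ ↔ i ≤ 1 + (j - 1) * (k / 2)) ∧
      (∀ i : ℕ, Qset k j ⊆ Nset i ↔ 1 + j * (k / 2) ≤ i) ∧
      (∀ e : Sym2 ℕ,
        chi (deltaL LS.links (Qset k j)) e
            - chi (deltaL LS.links (Nset (1 + j * (k / 2)))) e
            + chi (deltaL LS.links (Nset (1 + (j - 1) * (k / 2)))) e
          = 2 * chi (deltaL LS.links (Qset k j) ∩
                deltaL LS.links (Nset (1 + (j - 1) * (k / 2)))) e) ∧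
      (deltaL LS.links (Qset k j) ∩
          deltaL LS.links (Nset (1 + (j - 1) * (k / 2)))).card = k / 2 := by
  intro j hj
  simp only [Finset.mem_Icc] at hj
  obtain ⟨hj1, hj2⟩ := hj
  obtain ⟨r, hr⟩ := id hke
  have hq2 : 2 ≤ k / 2 := by omega
  have hmul : j * (k/2) = (j-1) * (k/2) + k/2 := by
    have h2 := add_one_mul (j-1) (k/2)
    rwa [show j - 1 + 1 = j by omega] at h2
  refine ⟨?_, ?_, ?_, card_inter hk hke LS hj1 hj2⟩
  · intro i
    constructor
    · intro he
      by_contra hi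
      have hmem : (2 + (j-1)*(k/2)) ∈ Nset i ∩ Qset k j := by
        simp only [Nset, Qset, Finset.mem_inter, Finset.mem_Icc]
        omega
      rw [he] at hmem
      exact absurd hmem (Finset.notMem_empty _)
    · intro hi
      rw [Finset.eq_empty_iff_forall_notMem]
      intro a ha
      simp only [Nset, Qset, Finset.mem_inter, Finset.mem_Icc] at ha
      omega
  · intro i
    constructor
    · intro hs
      have h1 : (1 + j*(k/2)) ∈ Qset k j := by
        simp only [Qset, Finset.mem_Icc]; omega
      have := hs h1
      simp only [Nset, Finset.mem_Icc] at this
      omega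
    · intro hi a ha
      simp only [Qset, Finset.mem_Icc] at ha
      simp only [Nset, Finset.mem_Icc]
      omega
  · intro e
    apply chi_comb
    · intro a ha hb
      simp only [Qset, Finset.mem_Icc] at ha
      simp only [Nset, Finset.mem_Icc] at hb
      omega
    · intro a
      simp only [Qset, Nset, Finset.mem_Icc]
      omega


end CoverSmallCuts
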